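/- Let X be a metric space, let α be a real number with 0 < α < 1, and let δ ≥ 0. Suppose x, y, z, m are points of X such that m is δ-between each pair with respect to the snowflaked metric dist^α, i.e. dist(x,m)^α + dist(m,y)^α ≤ dist(x,y)^α + δ, dist(y,m)^α + dist(m,z)^α ≤ dist(y,z)^α + δ, and dist(x,m)^α + dist(m,z)^α ≤ dist(x,z)^α + δ. Then the minimum of dist(x,y)^α, dist(y,z)^α, dist(x,z)^α is at most 2δ/(2 − 2^α). -/

import Mathlib

lemma snow_key (α : ℝ) (hα0 : 0 < α) (hα1 : α < 1) (u v : ℝ) (hu : 0 ≤ u) (huv : u ≤ v) :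
    (u + v) ^ α + ((2:ℝ) - 2 ^ α) * u ^ α ≤ u ^ α + v ^ α := by
  rcases eq_or_lt_of_le hu with h0 | h0
  · simp [← h0, Real.zero_rpow hα0.ne']
  · have hv : 0 < v := h0.trans_le huv
    have hconc := Real.concaveOn_rpow hα0.le hα1.le
    have hm1 : (u : ℝ) ∈ Set.Ici (0:ℝ) := hu
    have hm2 : (u + v : ℝ) ∈ Set.Ici (0:ℝ) := Set.mem_Ici.2 (by positivity)
    have ha : 0 ≤ u / v := by positivity
    have hb : 0 ≤ (v - u) / v := div_nonneg (by linarith) hv.le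
    have hab : u / v + (v - u) / v = 1 := by field_simp; ring
    have hba : (v - u) / v + u / v = 1 := by field_simp; ring
    have h1 := hconc.2 hm1 hm2 ha hb hab
    have h2 := hconc.2 hm1 hm2 hb ha hba
    simp only [smul_eq_mul] at h1 h2
    have e1 : u / v * u + (v - u) / v * (u + v) = v := by field_simp; ring
    have e2 : (v - u) / v * u + u / v * (u + v) = 2 * u := by field_simp; ring
    rw [e1] at h1
    rw [e2] at h2
    have e3 : (2 * u) ^ α = 2 ^ α * u ^ α := Real.mul_rpow (by norm_num) hu
    rw [e3] at h2
    have hx : u / v * u ^ α + (v - u) / v * u ^ α = u ^ α := by field_simp; ring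
    have hy : u / v * (u + v) ^ α + (v - u) / v * (u + v) ^ α = (u + v) ^ α := by
      field_simp; ring
    linarith

/-- quantitative core of Proposition 5.2(2): a δ-median point for
a triple in the snowflaked metric dist^α forces two of the three points to be
at bounded distance. -/
theorem stmt_11 {X : Type*} [MetricSpace X] (α : ℝ) (hα0 : 0 < α) (hα1 : α < 1)
    (δ : ℝ) (hδ : 0 ≤ δ) (x y z m : X)
    (hxy : dist x m ^ α + dist m y ^ α ≤ dist x y ^ α + δ)
    (hyz : dist y m ^ α + dist m z ^ α ≤ dist y z ^ α + δ)
    (hxz : dist x m ^ α + dist m z ^ α ≤ dist x z ^ α + δ) :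
    min (dist x y ^ α) (min (dist y z ^ α) (dist x z ^ α)) ≤
      2 * δ / (2 - 2 ^ α) := by
  have hc : (0:ℝ) < 2 - 2 ^ α := by
    have h2 : (2:ℝ) ^ α < 2 ^ (1:ℝ) :=
      Real.rpow_lt_rpow_of_exponent_lt one_lt_two hα1
    rw [Real.rpow_one] at h2
    linarith
  have bound : ∀ a b : X, dist a m ^ α + dist m b ^ α ≤ dist a b ^ α + δ →
      dist a m ≤ dist m b → ((2:ℝ) - 2 ^ α) * dist a m ^ α ≤ δ := by
    intro a b h hle
    have hk := snow_key α hα0 hα1 (dist a m) (dist m b) dist_nonneg hle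
    have htri : dist a b ^ α ≤ (dist a m + dist m b) ^ α :=
      Real.rpow_le_rpow dist_nonneg (dist_triangle a m b) hα0.le
    linarith
  have bound' : ∀ a b : X, dist a m ^ α + dist m b ^ α ≤ dist a b ^ α + δ →
      dist m b ≤ dist a m → ((2:ℝ) - 2 ^ α) * dist m b ^ α ≤ δ := by
    intro a b h hle
    have hk := snow_key α hα0 hα1 (dist m b) (dist a m) dist_nonneg hle
    have htri : dist a b ^ α ≤ (dist a m + dist m b) ^ α :=
      Real.rpow_le_rpow dist_nonneg (dist_triangle a m b) hα0.le
    rw [add_comm (dist m b)] at hk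
    linarith
  have sub : ∀ a b : X, dist a b ^ α ≤ dist a m ^ α + dist m b ^ α := by
    intro a b
    have htri : dist a b ^ α ≤ (dist a m + dist m b) ^ α :=
      Real.rpow_le_rpow dist_nonneg (dist_triangle a m b) hα0.le
    rcases le_total (dist a m) (dist m b) with h | h
    · have hk := snow_key α hα0 hα1 (dist a m) (dist m b) dist_nonneg h
      have hn : 0 ≤ ((2:ℝ) - 2 ^ α) * dist a m ^ α :=
        mul_nonneg hc.le (Real.rpow_nonneg dist_nonneg α)
      linarith
    · have hk := snow_key α hα0 hα1 (dist m b) (dist a m) dist_nonneg h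
      have hn : 0 ≤ ((2:ℝ) - 2 ^ α) * dist m b ^ α :=
        mul_nonneg hc.le (Real.rpow_nonneg dist_nonneg α)
      rw [add_comm (dist m b)] at hk
      linarith
  have final : ∀ a b : X, ((2:ℝ) - 2 ^ α) * dist a m ^ α ≤ δ →
      ((2:ℝ) - 2 ^ α) * dist m b ^ α ≤ δ → dist a b ^ α ≤ 2 * δ / ((2:ℝ) - 2 ^ α) := by
    intro a b h1 h2
    rw [le_div_iff₀ hc]
    have hs := sub a b
    nlinarith [mul_le_mul_of_nonneg_left hs hc.le]
  rcases le_total (dist x m) (dist m y) with h1 | h1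
  · have hp : ((2:ℝ) - 2 ^ α) * dist x m ^ α ≤ δ := bound x y hxy h1
    rcases le_total (dist y m) (dist m z) with h2 | h2
    · have hq : ((2:ℝ) - 2 ^ α) * dist m y ^ α ≤ δ := by
        have := bound y z hyz h2
        rwa [dist_comm y m] at this
      exact le_trans (min_le_left _ _) (final x y hp hq)
    · have hr : ((2:ℝ) - 2 ^ α) * dist m z ^ α ≤ δ := bound' y z hyz h2
      exact le_trans (le_trans (min_le_right _ _) (min_le_right _ _)) (final x z hp hr)
  · have hq : ((2:ℝ) - 2 ^ α) * dist m y ^ α ≤ δ := bound' x y hxy h1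
    rcases le_total (dist x m) (dist m z) with h2 | h2
    · have hp : ((2:ℝ) - 2 ^ α) * dist x m ^ α ≤ δ := bound x z hxz h2
      exact le_trans (min_le_left _ _) (final x y hp hq)
    · have hr : ((2:ℝ) - 2 ^ α) * dist m z ^ α ≤ δ := bound' x z hxz h2
      have hq' : ((2:ℝ) - 2 ^ α) * dist y m ^ α ≤ δ := by rwa [dist_comm y m]
      exact le_trans (le_trans (min_le_right _ _) (min_le_left _ _)) (final y z hq' hr)
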